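/- The sorting map rank is continuous on the simplex Δ = {(x_1,x_2,…) ∈ [0,1]^∞ : Σ x_i = 1} with the metric d(x,y) = Σ_i 2^{−i}|x_i − y_i|. -/

import Mathlib

/-- The nonincreasing rearrangement of a sequence: `rankSeq x n` is the
`(n+1)`-st largest value, namely the least `r` such that all but some `n`
indices have `x i ≤ r`. -/
noncomputable def rankSeq (x : ℕ → ℝ) (n : ℕ) : ℝ :=
  sInf {r : ℝ | ∃ A : Finset ℕ, A.card = n ∧ ∀ i ∉ A, x i ≤ r}

/-- The infinite simplex `Δ`. -/
def simplexΔ : Set (ℕ → ℝ) :=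
  {x | (∀ i, 0 ≤ x i) ∧ (∀ i, x i ≤ 1) ∧ HasSum x 1}

/-- The metric `d(x,y) = ∑ 2^{-i} |x_i - y_i|` on `Δ`. -/
noncomputable def dMetric (x y : ℕ → ℝ) : ℝ :=
  ∑' i : ℕ, (1 / 2 : ℝ) ^ i * |x i - y i|

lemma rankSet_mem_one (x : ℕ → ℝ) (hx1 : ∀ i, x i ≤ 1) (n : ℕ) :
    (1:ℝ) ∈ {r : ℝ | ∃ A : Finset ℕ, A.card = n ∧ ∀ i ∉ A, x i ≤ r} :=
  ⟨Finset.range n, Finset.card_range n, fun i _ => hx1 i⟩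

lemma rankSet_bddBelow (x : ℕ → ℝ) (hx0 : ∀ i, 0 ≤ x i) (n : ℕ) :
    BddBelow {r : ℝ | ∃ A : Finset ℕ, A.card = n ∧ ∀ i ∉ A, x i ≤ r} := by
  refine ⟨0, fun r hr => ?_⟩
  obtain ⟨A, -, hA⟩ := hr
  obtain ⟨i, hi⟩ := Infinite.exists_notMem_finset A
  exact le_trans (hx0 i) (hA i hi)

lemma rankSeq_nonneg (x : ℕ → ℝ) (hx0 : ∀ i, 0 ≤ x i) (hx1 : ∀ i, x i ≤ 1) (n : ℕ) :
    0 ≤ rankSeq x n :=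
  le_csInf ⟨1, rankSet_mem_one x hx1 n⟩ (fun r hr => by
    obtain ⟨A, -, hA⟩ := hr
    obtain ⟨i, hi⟩ := Infinite.exists_notMem_finset A
    exact le_trans (hx0 i) (hA i hi))

lemma rankSeq_le_one (x : ℕ → ℝ) (hx0 : ∀ i, 0 ≤ x i) (hx1 : ∀ i, x i ≤ 1) (n : ℕ) :
    rankSeq x n ≤ 1 :=
  csInf_le (rankSet_bddBelow x hx0 n) (rankSet_mem_one x hx1 n)

lemma rankSeq_le_add (x y : ℕ → ℝ) (hx1 : ∀ i, x i ≤ 1) (hy0 : ∀ i, 0 ≤ y i)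
    (c : ℝ) (hc : ∀ i, y i ≤ x i + c) (n : ℕ) :
    rankSeq y n ≤ rankSeq x n + c := by
  have h1 : rankSeq y n - c ≤ rankSeq x n := by
    apply le_csInf ⟨1, rankSet_mem_one x hx1 n⟩
    rintro r ⟨A, hAcard, hA⟩
    have h2 : rankSeq y n ≤ r + c :=
      csInf_le (rankSet_bddBelow y hy0 n)
        ⟨A, hAcard, fun i hi => (hc i).trans (by linarith [hA i hi])⟩
    linarith
  linarith

lemma summable_dterm (x y : ℕ → ℝ) (hx0 : ∀ i, 0 ≤ x i) (hx1 : ∀ i, x i ≤ 1)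
    (hy0 : ∀ i, 0 ≤ y i) (hy1 : ∀ i, y i ≤ 1) :
    Summable (fun i : ℕ => (1/2:ℝ)^i * |x i - y i|) := by
  refine Summable.of_nonneg_of_le (fun i => by positivity) (fun i => ?_)
    (summable_geometric_two.mul_right 2)
  have h : |x i - y i| ≤ 2 := by
    rw [abs_sub_le_iff]; constructor <;> nlinarith [hx0 i, hx1 i, hy0 i, hy1 i]
  have := mul_le_mul_of_nonneg_left h (by positivity : (0:ℝ) ≤ (1/2:ℝ)^i)
  simpa using this

/-- The sorting map `rank` is continuous on the simplex `Δ` with respect to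
the metric `d(x,y) = ∑ 2^{-i}|x_i - y_i|`. -/
theorem stmt6 :
    ∀ x ∈ simplexΔ, ∀ ε > (0 : ℝ), ∃ δ > (0 : ℝ), ∀ y ∈ simplexΔ,
      dMetric x y < δ → dMetric (rankSeq x) (rankSeq y) < ε := by
  rintro x ⟨hx0, hx1, hxs⟩ ε hε
  obtain ⟨N, hN⟩ := Metric.tendsto_atTop.mp hxs.tendsto_sum_nat (ε/8) (by linarith)
  have hH : |(∑ i ∈ Finset.range N, x i) - 1| < ε/8 := by
    simpa [Real.dist_eq] using hN N le_rfl
  set H := ∑ i ∈ Finset.range N, x i with hHdef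
  have h2N : (0:ℝ) < 2^N := by positivity
  refine ⟨ε / (8*(N+1)*2^N), by positivity, ?_⟩
  rintro y ⟨hy0, hy1, hys⟩ hd
  set Hy := ∑ i ∈ Finset.range N, y i with hHydef
  have hsumd : Summable (fun i : ℕ => (1/2:ℝ)^i * |x i - y i|) :=
    summable_dterm x y hx0 hx1 hy0 hy1
  have hd0 : 0 ≤ dMetric x y := tsum_nonneg (fun i => by positivity)
  have hterm : ∀ i, (1/2:ℝ)^i * |x i - y i| ≤ dMetric x y := fun i =>
    Summable.le_tsum hsumd i (fun j _ => by positivity)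
  have habs : ∀ i, |x i - y i| ≤ 2^i * dMetric x y := by
    intro i
    have h2 := mul_le_mul_of_nonneg_left (hterm i) (by positivity : (0:ℝ) ≤ 2^i)
    calc |x i - y i| = 2^i * ((1/2:ℝ)^i * |x i - y i|) := by
          rw [← mul_assoc, ← mul_pow]; norm_num
      _ ≤ _ := h2
  set K := (2:ℝ)^N * dMetric x y with hKdef
  have hK0 : 0 ≤ K := by positivity
  have hKbd : ((N:ℝ)+1) * K ≤ ε/8 := by
    have h1 : K ≤ 2^N * (ε / (8*(N+1)*2^N)) :=
      mul_le_mul_of_nonneg_left hd.le h2N.le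
    have h2 : ((N:ℝ)+1) * (2^N * (ε / (8*(N+1)*2^N))) = ε/8 := by
      field_simp
    nlinarith [Nat.cast_nonneg (α := ℝ) N]
  have hNK : (N:ℝ) * K ≤ ε/8 ∧ K ≤ ε/8 := by
    constructor <;> nlinarith [Nat.cast_nonneg (α := ℝ) N]
  have hsmall : ∀ i < N, |x i - y i| ≤ K := by
    intro i hi
    refine (habs i).trans ?_
    exact mul_le_mul_of_nonneg_right (pow_le_pow_right₀ (by norm_num) hi.le) hd0
  have hhead : |H - Hy| ≤ (N:ℝ) * K := by
    rw [hHdef, hHydef, ← Finset.sum_sub_distrib]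
    refine (Finset.abs_sum_le_sum_abs _ _).trans ?_
    calc ∑ i ∈ Finset.range N, |x i - y i| ≤ ∑ _i ∈ Finset.range N, K :=
          Finset.sum_le_sum (fun i hi => hsmall i (Finset.mem_range.mp hi))
      _ = (N:ℝ) * K := by simp [Finset.sum_const, Finset.card_range, nsmul_eq_mul]
  have htailx : ∀ i, N ≤ i → x i ≤ 1 - H := by
    intro i hi
    have hnot : i ∉ Finset.range N := by simp [Finset.mem_range]; omega
    have hsum : ∑ j ∈ insert i (Finset.range N), x j ≤ 1 := by
      rw [← hxs.tsum_eq]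
      exact Summable.sum_le_tsum _ (fun j _ => hx0 j) hxs.summable
    rw [Finset.sum_insert hnot] at hsum
    rw [hHdef]; linarith
  have htaily : ∀ i, N ≤ i → y i ≤ 1 - Hy := by
    intro i hi
    have hnot : i ∉ Finset.range N := by simp [Finset.mem_range]; omega
    have hsum : ∑ j ∈ insert i (Finset.range N), y j ≤ 1 := by
      rw [← hys.tsum_eq]
      exact Summable.sum_le_tsum _ (fun j _ => hy0 j) hys.summable
    rw [Finset.sum_insert hnot] at hsum
    rw [hHydef]; linarith
  have hc : ∀ i, |x i - y i| ≤ ε/4 := by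
    intro i
    rcases lt_or_ge i N with hi | hi
    · have := hsmall i hi
      linarith [hNK.2]
    · have h1 := htailx i hi
      have h2 := htaily i hi
      have h3 : 1 - H ≤ ε/8 := by
        have := abs_le.mp hH.le
        linarith [this.1]
      have h4 : H - Hy ≤ (N:ℝ) * K := (abs_le.mp hhead).2
      rw [abs_sub_le_iff]
      constructor
      · linarith [hy0 i]
      · linarith [hx0 i, hNK.1]
  have hrank : ∀ n, |rankSeq x n - rankSeq y n| ≤ ε/4 := by
    intro n
    have h1 : rankSeq y n ≤ rankSeq x n + ε/4 :=
      rankSeq_le_add x y hx1 hy0 (ε/4)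
        (fun i => by have := (abs_sub_le_iff.mp (hc i)).2; linarith) n
    have h2 : rankSeq x n ≤ rankSeq y n + ε/4 :=
      rankSeq_le_add y x hy1 hx0 (ε/4)
        (fun i => by have := (abs_sub_le_iff.mp (hc i)).1; linarith) n
    rw [abs_sub_le_iff]; constructor <;> linarith
  have hsumr : Summable (fun n : ℕ => (1/2:ℝ)^n * |rankSeq x n - rankSeq y n|) :=
    summable_dterm _ _ (rankSeq_nonneg x hx0 hx1) (rankSeq_le_one x hx0 hx1)
      (rankSeq_nonneg y hy0 hy1) (rankSeq_le_one y hy0 hy1)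
  have hbd : dMetric (rankSeq x) (rankSeq y) ≤ ∑' n : ℕ, (1/2:ℝ)^n * (ε/4) := by
    refine Summable.tsum_le_tsum (fun n => mul_le_mul_of_nonneg_left (hrank n) (by positivity))
      hsumr (summable_geometric_two.mul_right _)
  have heq : ∑' n : ℕ, (1/2:ℝ)^n * (ε/4) = 2 * (ε/4) := by
    rw [tsum_mul_right, tsum_geometric_two]
  rw [heq] at hbd
  linarith
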